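/- Under the mixed Moore Cayley hypotheses, suppose further that H is a subgroup of G of index 2, and set s₁ = |S₁ ∩ H| and s₂ = |S₂ ∩ H|. Then s₁ + s₂ = (2(z+r) − 1 ± √(4r−3))/4; precisely, as integers, (4(s₁ + s₂) − (2(z + r) − 1))² = 4r − 3. -/

import Mathlib

open scoped Pointwise

/-- Under the mixed Moore Cayley hypotheses, if `H` is an index 2 subgroup of `G` and `s₁ = |S₁ ∩ H|`, `s₂ = |S₂ ∩ H|`, then `s₁ + s₂ = (2(z+r) − 1 ± √(4r−3))/4`, i.e. `(4(s₁+s₂) − (2(z+r) − 1))² = 4r − 3` as integers. -/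
theorem mixed_moore_cayley_index_two {G : Type*} [Group G] [Fintype G] [DecidableEq G]
    (r z : ℕ) (hr : 0 < r) (hz : 0 < z)
    (S₁ S₂ : Finset G)
    (hcard : Fintype.card G = (z + r) ^ 2 + z + 1)
    (hone : (1 : G) ∉ S₁ ∪ S₂)
    (hdisj : Disjoint S₁ S₂)
    (hS₁inv : S₁⁻¹ = S₁) (hS₁card : S₁.card = r)
    (hS₂inv : S₂ ∩ S₂⁻¹ = ∅) (hS₂card : S₂.card = z)
    (hdiam : ∀ g : G, g ≠ 1 →
      g ∈ S₁ ∪ S₂ ∨ ∃ s ∈ S₁ ∪ S₂, ∃ t ∈ S₁ ∪ S₂, g = s * t)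
    (H : Subgroup G) [DecidablePred (· ∈ H)] (hH : H.index = 2) :
    (4 * (((S₁.filter (· ∈ H)).card + (S₂.filter (· ∈ H)).card : ℤ))
        - (2 * ((z : ℤ) + r) - 1)) ^ 2 = 4 * (r : ℤ) - 3 := by
  set S : Finset G := S₁ ∪ S₂ with hSdef
  set χ : G → ℤ := fun g => if g ∈ H then 1 else -1 with hχdef
  have hχmul : ∀ a b : G, χ (a * b) = χ a * χ b := by
    intro a b
    simp only [hχdef, Subgroup.mul_mem_iff_of_index_two hH]
    by_cases ha : a ∈ H <;> by_cases hb : b ∈ H <;> simp [ha, hb]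
  have hχ1 : χ 1 = 1 := by simp [hχdef, one_mem]
  -- generic summation formula
  have hsum : ∀ s : Finset G, ∑ g ∈ s, χ g
      = 2 * ((s.filter (· ∈ H)).card : ℤ) - s.card := by
    intro s
    have h1 : ∀ g ∈ s, χ g = 2 * (if g ∈ H then (1:ℤ) else 0) - 1 := by
      intro g _; simp only [hχdef]; split <;> ring
    rw [Finset.sum_congr rfl h1, Finset.sum_sub_distrib, ← Finset.mul_sum,
      Finset.sum_boole, Finset.sum_const, nsmul_eq_mul, mul_one]
  -- sum over the whole group is zero
  have hHcard : 2 * ((Finset.univ.filter (· ∈ H)).card : ℤ) = (Fintype.card G : ℤ) := by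
    have h1 : H.index * Nat.card H = Nat.card G := H.index_mul_card
    rw [hH, Nat.card_eq_fintype_card, Nat.card_eq_fintype_card, Fintype.card_subtype] at h1
    exact_mod_cast h1
  have hsum0 : ∑ g : G, χ g = 0 := by
    rw [hsum, hHcard, Finset.card_univ]; ring
  -- the set of pairs multiplying to 1
  have hP1 : (S ×ˢ S).filter (fun p => p.1 * p.2 = 1)
      = S₁.image (fun s => (s, s⁻¹)) := by
    ext ⟨a, b⟩
    simp only [Finset.mem_filter, Finset.mem_product, Finset.mem_image, Prod.mk.injEq]
    constructor
    · rintro ⟨⟨ha, hb⟩, hab⟩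
      have hb' : b = a⁻¹ := eq_inv_of_mul_eq_one_right hab
      subst hb'
      refine ⟨a, ?_, rfl, rfl⟩
      rcases Finset.mem_union.1 ha with h1 | h2
      · exact h1
      · exfalso
        rcases Finset.mem_union.1 hb with hb1 | hb2
        · have : a ∈ S₁ := by rw [← hS₁inv, Finset.mem_inv']; exact hb1
          exact Finset.disjoint_left.1 hdisj this h2
        · have : a ∈ S₂ ∩ S₂⁻¹ := Finset.mem_inter.2 ⟨h2, Finset.mem_inv'.2 hb2⟩
          rw [hS₂inv] at this
          exact absurd this (Finset.notMem_empty a)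
    · rintro ⟨s, hs, rfl, rfl⟩
      have hsi : s⁻¹ ∈ S₁ := by rw [← hS₁inv, Finset.mem_inv', inv_inv]; exact hs
      exact ⟨⟨Finset.mem_union_left _ hs, Finset.mem_union_left _ hsi⟩, mul_inv_cancel s⟩
  have hP1card : ((S ×ˢ S).filter (fun p => p.1 * p.2 = 1)).card = r := by
    rw [hP1, Finset.card_image_of_injective _ (fun x y h => congrArg Prod.fst h), hS₁card]
  set P : Finset (G × G) := (S ×ˢ S).filter (fun p => ¬ p.1 * p.2 = 1) with hPdef
  have hScard : S.card = r + z := by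
    rw [hSdef, Finset.card_union_of_disjoint hdisj, hS₁card, hS₂card]
  have hPsplit : ((S ×ˢ S).filter (fun p => p.1 * p.2 = 1)).card + P.card = (r + z) ^ 2 := by
    rw [hPdef, Finset.card_filter_add_card_filter_not, Finset.card_product, hScard]
    ring
  -- the complement set
  set A : Finset G := Finset.univ \ insert (1 : G) S with hAdef
  have hAcard : A.card + (r + z + 1) = Fintype.card G := by
    have h1 : (insert (1 : G) S).card = r + z + 1 := by
      rw [Finset.card_insert_of_notMem hone, hScard]
    rw [hAdef, ← h1, Finset.card_sdiff_add_card_eq_card (Finset.subset_univ _),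
      Finset.card_univ]
  have hPA : P.card = A.card := by
    have h1 := hPsplit
    rw [hP1card] at h1
    have hc : Fintype.card G = (r + z) ^ 2 + z + 1 := by rw [hcard]; ring_nf
    omega
  -- A is covered by products of pairs in P
  have hsub : A ⊆ P.image (fun p => p.1 * p.2) := by
    intro g hg
    rw [hAdef, Finset.mem_sdiff, Finset.mem_insert] at hg
    push_neg at hg
    obtain ⟨-, hg1, hgS⟩ := hg
    rcases hdiam g hg1 with h | ⟨s, hs, t, ht, rfl⟩
    · exact absurd h hgS
    · exact Finset.mem_image.2 ⟨(s, t), Finset.mem_filter.2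
        ⟨Finset.mem_product.2 ⟨hs, ht⟩, hg1⟩, rfl⟩
  have himg : A = P.image (fun p => p.1 * p.2) := by
    apply Finset.eq_of_subset_of_card_le hsub
    rw [← hPA]; exact Finset.card_image_le
  have hinj : Set.InjOn (fun p : G × G => p.1 * p.2) ↑P := by
    rw [← Finset.card_image_iff, ← himg, hPA]
  -- sum over A equals sum of products over P
  have hsumA : ∑ g ∈ A, χ g = ∑ p ∈ P, χ (p.1 * p.2) := by
    rw [himg, Finset.sum_image (fun x hx y hy h => hinj hx hy h)]
  -- sum over all pairs
  set a : ℤ := ∑ g ∈ S, χ g with hadef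
  have hpairs : ∑ p ∈ S ×ˢ S, χ (p.1 * p.2) = a * a := by
    rw [Finset.sum_product]
    simp_rw [hχmul, ← Finset.mul_sum, ← Finset.sum_mul]
    rfl
  have hsumP1 : ∑ p ∈ (S ×ˢ S).filter (fun p => p.1 * p.2 = 1), χ (p.1 * p.2)
      = (r : ℤ) := by
    rw [Finset.sum_congr rfl (fun p hp => by
      rw [(Finset.mem_filter.1 hp).2, hχ1]), Finset.sum_const, hP1card]
    simp
  have hsumP : ∑ p ∈ P, χ (p.1 * p.2) = a * a - r := by
    have := Finset.sum_filter_add_sum_filter_not (S ×ˢ S)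
      (fun p => p.1 * p.2 = 1) (fun p => χ (p.1 * p.2))
    rw [hsumP1, hpairs] at this
    rw [hPdef]; linarith
  -- combine
  have hkey : a * a + a + 1 = (r : ℤ) := by
    have hsplit : ∑ g ∈ A, χ g + ∑ g ∈ insert (1 : G) S, χ g = ∑ g : G, χ g := by
      rw [hAdef]; exact Finset.sum_sdiff (Finset.subset_univ _)
    rw [Finset.sum_insert hone, hχ1, hsum0, hsumA, hsumP] at hsplit
    linarith
  -- express a via the filtered cardinalities
  have hfilter : (S.filter (· ∈ H)).card
      = (S₁.filter (· ∈ H)).card + (S₂.filter (· ∈ H)).card := by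
    rw [hSdef, Finset.filter_union,
      Finset.card_union_of_disjoint (Finset.disjoint_filter_filter hdisj)]
  have ha : a = 2 * (((S₁.filter (· ∈ H)).card + (S₂.filter (· ∈ H)).card : ℤ))
      - ((r : ℤ) + z) := by
    rw [hadef, hsum, hfilter, hScard]; push_cast; ring
  have h2 : 4 * (((S₁.filter (· ∈ H)).card + (S₂.filter (· ∈ H)).card : ℤ))
      - (2 * ((z : ℤ) + r) - 1) = 2 * a + 1 := by rw [ha]; ring
  rw [h2]
  linear_combination 4 * hkey
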